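/- Let L be a Lie algebra over a field F of characteristic 0 graded by an arbitrary group G, and let (V, ψ) be a finite dimensional graded L-module that is completely reducible as an L-module (disregarding the grading). Then V = V₁ ⊕ V₂ ⊕ … ⊕ V_s for some irreducible graded L-submodules Vᵢ. -/

import Mathlib

noncomputable section

attribute [local instance] LieRing.ofAssociativeRing

/-- A `G`-grading on a Lie algebra `L`: a decomposition `L = ⊕_{g ∈ G} L^{(g)}` into subspaces
with `⁅L^{(g)}, L^{(h)}⁆ ⊆ L^{(gh)}`. -/
structure LieGrading (F G L : Type*) [Field F] [Group G] [LieRing L] [LieAlgebra F L] where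
  piece : G → Submodule F L
  indep : iSupIndep piece
  total : (⨆ g : G, piece g) = ⊤
  bracket_mem : ∀ (g h : G) (x y : L), x ∈ piece g → y ∈ piece h → ⁅x, y⁆ ∈ piece (g * h)

/-- A subspace `W` is graded if `W = ⊕_{g ∈ G} (W ∩ L^{(g)})`. -/
def LieGrading.IsGraded {F G L : Type*} [Field F] [Group G] [LieRing L] [LieAlgebra F L]
    (𝒢 : LieGrading F G L) (W : Submodule F L) : Prop :=
  (⨆ g : G, W ⊓ 𝒢.piece g) = W

/-- A `G`-graded module `(V, ψ)` over a `G`-graded Lie algebra `L`: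
`ψ(L^{(g)}) V^{(h)} ⊆ V^{(gh)}`. -/
structure GradedLieModule (F G L V : Type*) [Field F] [Group G]
    [LieRing L] [LieAlgebra F L] [AddCommGroup V] [Module F V]
    (𝒢 : LieGrading F G L) where
  ψ : L →ₗ⁅F⁆ Module.End F V
  piece : G → Submodule F V
  indep : iSupIndep piece
  total : (⨆ g : G, piece g) = ⊤
  smul_mem : ∀ (g h : G) (a : L) (v : V),
    a ∈ 𝒢.piece g → v ∈ piece h → ψ a v ∈ piece (g * h)

section

variable {F G L V : Type*} [Field F] [Group G]
    [LieRing L] [LieAlgebra F L] [AddCommGroup V] [Module F V]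
    {𝒢 : LieGrading F G L}

/-- A subspace stable under the `L`-action. -/
def GradedLieModule.IsLSubmodule (M : GradedLieModule F G L V 𝒢) (W : Submodule F V) : Prop :=
  ∀ (a : L), ∀ v ∈ W, M.ψ a v ∈ W

/-- A graded `L`-submodule: an `L`-submodule `W` with `W = ⊕_{g ∈ G} (W ∩ V^{(g)})`. -/
def GradedLieModule.IsGradedLSubmodule (M : GradedLieModule F G L V 𝒢)
    (W : Submodule F V) : Prop :=
  M.IsLSubmodule W ∧ (⨆ g : G, W ⊓ M.piece g) = W

/-- A nonzero graded `L`-submodule `W` is irreducible if it contains no nontrivial graded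
`L`-submodules. -/
def GradedLieModule.IsIrreducible (M : GradedLieModule F G L V 𝒢)
    (W : Submodule F V) : Prop :=
  W ≠ ⊥ ∧ ∀ U : Submodule F V, U ≤ W → M.IsGradedLSubmodule U → U = ⊥ ∨ U = W

/-- `V` is completely reducible as an `L`-module (disregarding the grading). -/
def GradedLieModule.IsCompletelyReducible (M : GradedLieModule F G L V 𝒢) : Prop :=
  ∀ W : Submodule F V, M.IsLSubmodule W →
    ∃ W' : Submodule F V, M.IsLSubmodule W' ∧ IsCompl W W'

end


section Aux

open Module Submodule
open scoped DirectSum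

variable {F G L V : Type*} [Field F] [Group G] [DecidableEq G]
    [LieRing L] [LieAlgebra F L] [AddCommGroup V] [Module F V]
    {𝒢 : LieGrading F G L} (M : GradedLieModule F G L V 𝒢)

namespace GradedLieModule

lemma internal : DirectSum.IsInternal M.piece :=
  (DirectSum.isInternal_submodule_iff_iSupIndep_and_iSup_eq_top _).mpr ⟨M.indep, M.total⟩

/-- The internal direct sum decomposition of `V`. -/
noncomputable def dec : (⨁ g : G, M.piece g) ≃ₗ[F] V :=
  LinearEquiv.ofBijective (DirectSum.coeLinearMap M.piece) M.internal

/-- The projection onto the `g`-th graded piece of `V`. -/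
noncomputable def proj (g : G) : V →ₗ[F] V :=
  (M.piece g).subtype ∘ₗ (DFinsupp.lapply g : (⨁ g : G, M.piece g) →ₗ[F] M.piece g) ∘ₗ
    (M.dec.symm : V →ₗ[F] ⨁ g : G, M.piece g)

lemma proj_apply (g : G) (v : V) : M.proj g v = ((M.dec.symm v) g : V) := rfl

lemma proj_mem (g : G) (v : V) : M.proj g v ∈ M.piece g := ((M.dec.symm v) g).2

lemma proj_of_mem {g : G} {v : V} (hv : v ∈ M.piece g) : M.proj g v = v := by
  rw [proj_apply]
  show (((LinearEquiv.ofBijective (DirectSum.coeLinearMap M.piece) M.internal).symm v) g : V) = v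
  rw [M.internal.ofBijective_coeLinearMap_of_mem hv]

lemma proj_of_mem_ne {g h : G} {v : V} (hgh : h ≠ g) (hv : v ∈ M.piece h) :
    M.proj g v = 0 := by
  rw [proj_apply]
  show (((LinearEquiv.ofBijective (DirectSum.coeLinearMap M.piece) M.internal).symm v) g : V) = 0
  rw [M.internal.ofBijective_coeLinearMap_of_mem_ne hgh hv]
  rfl

section FD

variable [FiniteDimensional F V]

lemma finite_ne_bot : {g : G | M.piece g ≠ ⊥}.Finite := by
  have h : Finite {g : G // M.piece g ≠ ⊥} := by
    haveI := M.indep.fintypeNeBotOfFiniteDimensional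
    exact Finite.of_fintype _
  exact Set.finite_coe_iff.mp h

/-- The finite set of indices with nonzero graded piece. -/
noncomputable def T : Finset G := M.finite_ne_bot.toFinset

lemma mem_T {g : G} : g ∈ M.T ↔ M.piece g ≠ ⊥ := Set.Finite.mem_toFinset _

lemma piece_eq_bot_of_not_mem_T {g : G} (hg : g ∉ M.T) : M.piece g = ⊥ := by
  by_contra h; exact hg (M.mem_T.mpr h)

lemma sum_proj (v : V) : ∑ g ∈ M.T, M.proj g v = v := by
  classical
  have hsub : (M.dec.symm v).support ⊆ M.T := by
    intro g hg
    rw [DFinsupp.mem_support_iff] at hg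
    rw [mem_T]
    intro hbot
    apply hg
    have h2 := M.proj_mem g v
    rw [hbot, Submodule.mem_bot, M.proj_apply] at h2
    exact Subtype.ext (by simpa using h2)
  have hv : v = ∑ g ∈ (M.dec.symm v).support, M.proj g v := by
    conv_lhs => rw [← M.dec.apply_symm_apply v, ← DirectSum.sum_support_of (M.dec.symm v)]
    rw [map_sum]
    refine Finset.sum_congr rfl fun g _ => ?_
    rw [proj_apply]
    exact DirectSum.coeLinearMap_of M.piece g _
  refine (Finset.sum_subset hsub ?_).symm.trans hv.symm
  intro g _ hg
  rw [DFinsupp.notMem_support_iff] at hg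
  rw [M.proj_apply, hg]
  exact ZeroMemClass.coe_zero _

lemma isGraded_iff (W : Submodule F V) :
    (⨆ g : G, W ⊓ M.piece g) = W ↔ ∀ g : G, ∀ v ∈ W, M.proj g v ∈ W := by
  constructor
  · intro h g v hv
    rw [← h] at hv
    refine Submodule.iSup_induction (motive := fun v => M.proj g v ∈ W)
      (fun g => W ⊓ M.piece g) hv ?_ ?_ ?_
    · intro k x hx
      by_cases hkg : k = g
      · subst hkg
        rw [M.proj_of_mem hx.2]
        exact hx.1
      · rw [M.proj_of_mem_ne hkg hx.2]
        exact W.zero_mem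
    · simpa using W.zero_mem
    · intro x y hx hy
      simpa using W.add_mem hx hy
  · intro h
    refine le_antisymm (iSup_le fun g => inf_le_left) fun v hv => ?_
    rw [← M.sum_proj v]
    exact Submodule.sum_mem _ fun g _ =>
      Submodule.mem_iSup_of_mem g ⟨h g v hv, M.proj_mem g v⟩

lemma isGradedLSubmodule_inf {A B : Submodule F V}
    (hA : M.IsGradedLSubmodule A) (hB : M.IsGradedLSubmodule B) :
    M.IsGradedLSubmodule (A ⊓ B) := by
  refine ⟨fun a v hv => ⟨hA.1 a v hv.1, hB.1 a v hv.2⟩, (M.isGraded_iff _).mpr ?_⟩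
  intro g v hv
  exact ⟨(M.isGraded_iff A).mp hA.2 g v hv.1, (M.isGraded_iff B).mp hB.2 g v hv.2⟩

lemma proj_piece (g h : G) (v : V) (hv : v ∈ M.piece h) :
    M.proj g v = if g = h then v else 0 := by
  split
  · exact (‹g = h› ▸ M.proj_of_mem hv :)
  · exact M.proj_of_mem_ne (Ne.symm ‹g ≠ h›) hv

lemma exists_graded_compl (hcr : M.IsCompletelyReducible) {W : Submodule F V}
    (hW : M.IsGradedLSubmodule W) :
    ∃ K : Submodule F V, M.IsGradedLSubmodule K ∧ IsCompl W K := by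
  classical
  obtain ⟨W', hW'L, hc⟩ := hcr W hW.1
  set π : V →ₗ[F] V := W.subtype ∘ₗ (W.linearProjOfIsCompl W' hc) with hπdef
  have hπ_mem : ∀ v, π v ∈ W := fun v => (W.linearProjOfIsCompl W' hc v).2
  have hπ_left : ∀ v ∈ W, π v = v := by
    intro v hv
    have h1 : W.linearProjOfIsCompl W' hc v = ⟨v, hv⟩ :=
      Submodule.linearProjOfIsCompl_apply_left hc ⟨v, hv⟩
    simp [hπdef, h1]
  have hπ_right : ∀ v ∈ W', π v = 0 := by
    intro v hv
    have h1 : W.linearProjOfIsCompl W' hc v = 0 :=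
      Submodule.projectionOnto_apply_of_mem_right hc hv
    simp [hπdef, h1]
  have hπ_comm : ∀ (a : L) (v : V), π (M.ψ a v) = M.ψ a (π v) := by
    intro a v
    have hv : v ∈ W ⊔ W' := by rw [hc.sup_eq_top]; trivial
    obtain ⟨w, hw, w', hw', rfl⟩ := Submodule.mem_sup.mp hv
    rw [show (M.ψ a) (w + w') = M.ψ a w + M.ψ a w' from map_add _ _ _,
      show π (w + w') = π w + π w' from map_add _ _ _,
      map_add, map_add, hπ_left w hw, hπ_right w' hw', hπ_left _ (hW.1 a w hw),
      hπ_right _ (hW'L a w' hw')]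
    simp
  set Pr : V →ₗ[F] V := ∑ g ∈ M.T, (M.proj g) ∘ₗ π ∘ₗ (M.proj g) with hPrdef
  have hPr_apply : ∀ v, Pr v = ∑ g ∈ M.T, M.proj g (π (M.proj g v)) := by
    intro v
    rw [hPrdef, LinearMap.sum_apply]
    rfl
  have hWproj : ∀ g : G, ∀ v ∈ W, M.proj g v ∈ W := (M.isGraded_iff W).mp hW.2
  have hPr_mem : ∀ v, Pr v ∈ W := by
    intro v
    rw [hPr_apply]
    exact Submodule.sum_mem _ fun g _ => hWproj g _ (hπ_mem _)
  have hPr_left : ∀ v ∈ W, Pr v = v := by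
    intro v hv
    rw [hPr_apply]
    calc ∑ g ∈ M.T, M.proj g (π (M.proj g v)) = ∑ g ∈ M.T, M.proj g v := by
          refine Finset.sum_congr rfl fun g _ => ?_
          rw [hπ_left _ (hWproj g v hv), M.proj_of_mem (M.proj_mem g v)]
      _ = v := M.sum_proj v
  have hproj_zero : ∀ g : G, g ∉ M.T → ∀ v : V, M.proj g v = 0 := by
    intro g hg v
    have h1 := M.proj_mem g v
    rw [M.piece_eq_bot_of_not_mem_T hg] at h1
    simpa using h1
  have hPr_single : ∀ (h : G) (v : V), v ∈ M.piece h → h ∈ M.T →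
      Pr v = M.proj h (π v) := by
    intro h v hvh hh
    have hz : ∀ g ∈ M.T, g ≠ h → M.proj g (π (M.proj g v)) = 0 := by
      intro g _ hgh
      rw [M.proj_piece g h v hvh, if_neg hgh, map_zero, map_zero]
    rw [hPr_apply, Finset.sum_eq_single_of_mem h hh hz]
    simp only [M.proj_of_mem hvh]
  have hPr_proj : ∀ (h : G) (v : V), Pr (M.proj h v) = M.proj h (Pr v) := by
    intro h v
    by_cases hh : h ∈ M.T
    · rw [hPr_single h _ (M.proj_mem h v) hh]
      have hz : ∀ g ∈ M.T, g ≠ h → M.proj h (M.proj g (π (M.proj g v))) = 0 := by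
        intro g _ hgh
        rw [M.proj_piece h g _ (M.proj_mem g _), if_neg (Ne.symm hgh)]
      rw [hPr_apply, map_sum, Finset.sum_eq_single_of_mem h hh hz]
      exact (M.proj_of_mem (M.proj_mem h (π ((M.proj h) v)))).symm
    · rw [hproj_zero h hh, hproj_zero h hh, map_zero]
  have hPr_comm : ∀ (a : L) (v : V), Pr (M.ψ a v) = M.ψ a (Pr v) := by
    suffices hhom : ∀ k : G, ∀ a ∈ 𝒢.piece k, ∀ v : V, Pr (M.ψ a v) = M.ψ a (Pr v) by
      intro a v
      have ha : a ∈ (⨆ g : G, 𝒢.piece g) := by rw [𝒢.total]; trivial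
      refine Submodule.iSup_induction (motive := fun a => ∀ v : V, Pr (M.ψ a v) = M.ψ a (Pr v))
        𝒢.piece ha (fun k a hak => hhom k a hak) ?_ ?_ v
      · intro v; simp
      · intro x y hx hy v
        simp [map_add, LinearMap.add_apply, hx v, hy v]
    intro k a hak v
    have hv : v ∈ (⨆ g : G, M.piece g) := by rw [M.total]; trivial
    refine Submodule.iSup_induction (motive := fun v => Pr (M.ψ a v) = M.ψ a (Pr v))
      M.piece hv ?_ ?_ ?_
    · intro h v hvh
      by_cases hh : h ∈ M.T
      · have hPrv : Pr v = M.proj h (π v) := hPr_single h v hvh hh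
        have hav : M.ψ a v ∈ M.piece (k * h) := M.smul_mem k h a v hak hvh
        by_cases hkh : (k * h) ∈ M.T
        · rw [hPr_single (k * h) _ hav hkh, hπ_comm, hPrv]
          have hz : ∀ g ∈ M.T, g ≠ h → M.proj (k * h) (M.ψ a (M.proj g (π v))) = 0 := by
            intro g _ hgh
            have h1 : M.ψ a (M.proj g (π v)) ∈ M.piece (k * g) :=
              M.smul_mem k g a _ hak (M.proj_mem g _)
            rw [M.proj_piece (k * h) (k * g) _ h1, if_neg]
            intro he
            exact hgh (mul_left_cancel he).symm
          conv_lhs => rw [← M.sum_proj (π v), map_sum, map_sum]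
          rw [Finset.sum_eq_single_of_mem h hh hz]
          exact M.proj_of_mem (M.smul_mem k h a _ hak (M.proj_mem h _))
        · have h1 : M.ψ a v = 0 := by
            rw [M.piece_eq_bot_of_not_mem_T hkh] at hav
            simpa using hav
          rw [h1, map_zero, hPrv]
          have h2 : M.ψ a (M.proj h (π v)) ∈ M.piece (k * h) :=
            M.smul_mem k h a _ hak (M.proj_mem h _)
          rw [M.piece_eq_bot_of_not_mem_T hkh] at h2
          simpa using (Submodule.mem_bot F).mp h2 |>.symm
      · have h0 : v = 0 := by
          rw [M.piece_eq_bot_of_not_mem_T hh] at hvh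
          simpa using hvh
        simp [h0]
    · simp
    · intro x y hx hy
      simp [map_add, hx, hy]
  refine ⟨LinearMap.ker Pr, ⟨⟨fun a v hv => ?_, (M.isGraded_iff _).mpr fun g v hv => ?_⟩, ?_⟩⟩
  · rw [LinearMap.mem_ker] at hv ⊢
    rw [hPr_comm, hv, map_zero]
  · rw [LinearMap.mem_ker] at hv ⊢
    rw [hPr_proj, hv, map_zero]
  · constructor
    · rw [Submodule.disjoint_def]
      intro x hxW hxK
      rw [LinearMap.mem_ker] at hxK
      rw [← hPr_left x hxW, hxK]
    · rw [codisjoint_iff_le_sup]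
      intro v _
      refine Submodule.mem_sup.mpr ⟨Pr v, hPr_mem v, v - Pr v, ?_, by abel⟩
      rw [LinearMap.mem_ker, map_sub, hPr_left _ (hPr_mem v), sub_self]

lemma exists_irreducible {W : Submodule F V} (hW : M.IsGradedLSubmodule W) (hne : W ≠ ⊥) :
    ∃ U : Submodule F V, U ≤ W ∧ M.IsGradedLSubmodule U ∧ M.IsIrreducible U := by
  classical
  have hS : {n : ℕ | ∃ U : Submodule F V,
      U ≤ W ∧ M.IsGradedLSubmodule U ∧ U ≠ ⊥ ∧ finrank F U = n}.Nonempty :=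
    ⟨finrank F W, W, le_rfl, hW, hne, rfl⟩
  obtain ⟨U, hUW, hUg, hUne, hUrank⟩ := Nat.sInf_mem hS
  refine ⟨U, hUW, hUg, hUne, fun U' hU'le hU'g => ?_⟩
  by_cases h0 : U' = ⊥
  · exact Or.inl h0
  · refine Or.inr (Submodule.eq_of_le_of_finrank_le hU'le ?_)
    rw [hUrank]
    exact Nat.sInf_le ⟨U', hU'le.trans hUW, hU'g, h0, rfl⟩

end FD

end GradedLieModule

lemma iSup_fin_cons {α : Type*} [CompleteLattice α] {n : ℕ} (a : α) (f : Fin n → α) :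
    (⨆ i, Fin.cons a f i) = a ⊔ ⨆ i, f i := by
  refine le_antisymm (iSup_le fun i => ?_) (sup_le ?_ (iSup_le fun j => ?_))
  · induction i using Fin.cases with
    | zero => exact le_sup_left
    | succ j => exact le_trans (by rw [Fin.cons_succ]) (le_trans (le_iSup f j) le_sup_right)
  · simpa using le_iSup (Fin.cons a f) 0
  · simpa using le_iSup (Fin.cons a f) j.succ

lemma iSupIndep_fin_cons {α : Type*} [CompleteLattice α] [IsModularLattice α] {n : ℕ}
    {a : α} {f : Fin n → α} (hf : iSupIndep f) (ha : Disjoint a (⨆ i, f i)) :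
    iSupIndep (Fin.cons a f) := by
  intro i
  induction i using Fin.cases with
  | zero =>
    rw [Fin.cons_zero]
    refine ha.mono_right (iSup₂_le fun j hj => ?_)
    induction j using Fin.cases with
    | zero => exact absurd rfl hj
    | succ m => rw [Fin.cons_succ]; exact le_iSup f m
  | succ i =>
    rw [Fin.cons_succ]
    have h1 : (⨆ j, ⨆ _ : j ≠ Fin.succ i, Fin.cons a f j) ≤ a ⊔ ⨆ j, ⨆ _ : j ≠ i, f j := by
      refine iSup₂_le fun j hj => ?_
      induction j using Fin.cases with
      | zero => rw [Fin.cons_zero]; exact le_sup_left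
      | succ m =>
        rw [Fin.cons_succ]
        have hm : m ≠ i := fun h => hj (by rw [h])
        exact le_trans (le_iSup₂ (f := fun j _ => f j) m hm) le_sup_right
    refine Disjoint.mono_right h1 ?_
    rw [sup_comm]
    refine Disjoint.disjoint_sup_right_of_disjoint_sup_left (hf i) ?_
    refine ha.symm.mono_left (sup_le (le_iSup f i) (iSup₂_le fun j _ => le_iSup f j))

lemma GradedLieModule.decompose [FiniteDimensional F V] (hcr : M.IsCompletelyReducible) :
    ∀ (n : ℕ) (W : Submodule F V), Module.finrank F W ≤ n → M.IsGradedLSubmodule W →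
    ∃ (s : ℕ) (fam : Fin s → Submodule F V), iSupIndep fam ∧ (⨆ i, fam i) = W ∧
      ∀ i, M.IsGradedLSubmodule (fam i) ∧ M.IsIrreducible (fam i) := by
  have hbotcase : ∀ W : Submodule F V, W = ⊥ →
      ∃ (s : ℕ) (fam : Fin s → Submodule F V), iSupIndep fam ∧ (⨆ i, fam i) = W ∧
      ∀ i, M.IsGradedLSubmodule (fam i) ∧ M.IsIrreducible (fam i) := by
    intro W hW
    refine ⟨0, Fin.elim0, fun i => i.elim0, ?_, fun i => i.elim0⟩
    rw [hW]
    exact iSup_of_empty _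
  intro n
  induction n with
  | zero =>
    intro W hrank _
    refine hbotcase W ?_
    rw [← Submodule.finrank_eq_zero (R := F) (M := V)]
    omega
  | succ n ih =>
    intro W hrank hW
    by_cases hbot : W = ⊥
    · exact hbotcase W hbot
    · obtain ⟨U, hUW, hUg, hUirr⟩ := M.exists_irreducible hW hbot
      obtain ⟨K, hKg, hKc⟩ := M.exists_graded_compl hcr hUg
      set U' := K ⊓ W with hU'def
      have hU'g : M.IsGradedLSubmodule U' := M.isGradedLSubmodule_inf hKg hW
      have hdisj : Disjoint U U' := hKc.disjoint.mono_right inf_le_left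
      have hsup : U ⊔ U' = W := by
        rw [hU'def, ← sup_inf_assoc_of_le K hUW, hKc.codisjoint.eq_top, top_inf_eq]
      have hrankU' : Module.finrank F U' ≤ n := by
        have h1 := Submodule.finrank_sup_add_finrank_inf_eq U U'
        rw [hsup, hdisj.eq_bot] at h1
        have h2 : Module.finrank F (⊥ : Submodule F V) = 0 := finrank_bot F V
        have h3 : 0 < Module.finrank F U := by
          rcases Nat.eq_zero_or_pos (Module.finrank F U) with h | h
          · exact absurd (Submodule.finrank_eq_zero.mp h) hUirr.1
          · exact h
        omega
      obtain ⟨s, fam, hfam_ind, hfam_sup, hfam⟩ := ih U' hrankU' hU'g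
      refine ⟨s + 1, Fin.cons U fam, ?_, ?_, ?_⟩
      · exact iSupIndep_fin_cons hfam_ind (hfam_sup ▸ hdisj)
      · rw [iSup_fin_cons, hfam_sup]
        exact hsup
      · intro i
        induction i using Fin.cases with
        | zero => exact ⟨hUg, hUirr⟩
        | succ j => exact hfam j

end Aux

/-- a finite dimensional graded module `(V,ψ)` over a Lie algebra `L`
(char `0`) graded by an arbitrary group `G`, completely reducible as an `L`-module, is a
direct sum of irreducible graded `L`-submodules. -/
theorem graded_module_decomposes_into_irreducibles
    (F G L V : Type*) [Field F] [CharZero F] [Group G]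
    [LieRing L] [LieAlgebra F L] [AddCommGroup V] [Module F V] [FiniteDimensional F V]
    (𝒢 : LieGrading F G L) (M : GradedLieModule F G L V 𝒢)
    (hcr : M.IsCompletelyReducible) :
    ∃ (s : ℕ) (Vfam : Fin s → Submodule F V),
      iSupIndep Vfam ∧ (⨆ i, Vfam i) = ⊤ ∧
      ∀ i, M.IsGradedLSubmodule (Vfam i) ∧ M.IsIrreducible (Vfam i) := by
  letI := Classical.decEq G
  have htop : M.IsGradedLSubmodule (⊤ : Submodule F V) := by
    refine ⟨fun a v _ => trivial, ?_⟩
    simpa using M.total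
  obtain ⟨s, fam, h1, h2, h3⟩ :=
    M.decompose hcr (Module.finrank F V) ⊤ (by rw [finrank_top]) htop
  exact ⟨s, fam, h1, h2, h3⟩
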